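/- Let c₁, c₂ > 0, m : ℝ → ℝ³ and s : ℝ → ℝ be continuous, and let v, β : ℝ → ℝ³ be differentiable with (d/dt)v(t) = v(t) × m(t) − (1/2) s(t) β(t) − c₁ v(t) and (d/dt)β(t) = c₂ s(t) v(t) for all t. Then the Lyapunov function V(t) = ‖v(t)‖² + (1/(2c₂)) ‖β(t)‖² satisfies (d/dt)V(t) = −2 c₁ ‖v(t)‖² for all t; in particular V is nonincreasing, so v and β remain bounded for all time. -/

import Mathlib

open Filter Real Topology

noncomputable section

/-- ℝ³ with the Euclidean norm. -/
abbrev E3 := EuclideanSpace ℝ (Fin 3)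

/-- Cross product on ℝ³. -/
def cross (u v : E3) : E3 :=
  WithLp.toLp 2 ![u 1 * v 2 - u 2 * v 1, u 2 * v 0 - u 0 * v 2, u 0 * v 1 - u 1 * v 0]

/-- The quaternion with real (scalar) part `a` and vector (imaginary) part `v`. -/
def quat (a : ℝ) (v : E3) : Quaternion ℝ := ⟨a, v 0, v 1, v 2⟩

/-- The vector (imaginary) part of a quaternion, as an element of ℝ³. -/
def qvec (q : Quaternion ℝ) : E3 := WithLp.toLp 2 ![q.imI, q.imJ, q.imK]

lemma inner_cross_self (u w : E3) : inner ℝ u (cross u w) = (0 : ℝ) := by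
  simp only [PiLp.inner_apply, RCLike.inner_apply, conj_trivial, Fin.sum_univ_three, cross, PiLp.toLp_apply,
    Matrix.cons_val_zero, Matrix.cons_val_one, Matrix.head_cons, Matrix.cons_val_two,
    Matrix.tail_cons]
  ring

/-- Along the orientation-observer error dynamics
`v̇ = v × m(t) − (1/2) s(t) β(t) − c₁ v`, `β̇ = c₂ s(t) v`, the Lyapunov function
`V(t) = ‖v(t)‖² + (1/(2c₂))‖β(t)‖²` satisfies `V̇(t) = −2c₁‖v(t)‖²`; in particular `V` is
nonincreasing, so `v` and `β` remain bounded for all (forward) time. -/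
theorem stmt_16 (c₁ c₂ : ℝ) (hc₁ : 0 < c₁) (hc₂ : 0 < c₂)
    (m : ℝ → E3) (s : ℝ → ℝ) (hm : Continuous m) (hs : Continuous s)
    (v β : ℝ → E3)
    (hv : ∀ t, HasDerivAt v (cross (v t) (m t) - (s t / 2) • β t - c₁ • v t) t)
    (hβ : ∀ t, HasDerivAt β ((c₂ * s t) • v t) t) :
    (∀ t, HasDerivAt (fun τ => ‖v τ‖ ^ 2 + (1 / (2 * c₂)) * ‖β τ‖ ^ 2)
        (-2 * c₁ * ‖v t‖ ^ 2) t) ∧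
    Antitone (fun τ => ‖v τ‖ ^ 2 + (1 / (2 * c₂)) * ‖β τ‖ ^ 2) ∧
    ∃ C, ∀ t, 0 ≤ t → ‖v t‖ ≤ C ∧ ‖β t‖ ≤ C := by
  set V : ℝ → ℝ := fun τ => ‖v τ‖ ^ 2 + (1 / (2 * c₂)) * ‖β τ‖ ^ 2 with hV
  have hder : ∀ t, HasDerivAt V (-2 * c₁ * ‖v t‖ ^ 2) t := by
    intro t
    have h1 : HasDerivAt (fun τ => (inner ℝ (v τ) (v τ) : ℝ))
        (inner ℝ (v t) (cross (v t) (m t) - (s t / 2) • β t - c₁ • v t)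
          + inner ℝ (cross (v t) (m t) - (s t / 2) • β t - c₁ • v t) (v t)) t :=
      (hv t).inner ℝ (hv t)
    have h2 : HasDerivAt (fun τ => (inner ℝ (β τ) (β τ) : ℝ))
        (inner ℝ (β t) ((c₂ * s t) • v t) + inner ℝ ((c₂ * s t) • v t) (β t)) t :=
      (hβ t).inner ℝ (hβ t)
    have key : HasDerivAt V
        ((inner ℝ (v t) (cross (v t) (m t) - (s t / 2) • β t - c₁ • v t)
          + inner ℝ (cross (v t) (m t) - (s t / 2) • β t - c₁ • v t) (v t))
         + (1 / (2 * c₂)) * (inner ℝ (β t) ((c₂ * s t) • v t) + inner ℝ ((c₂ * s t) • v t) (β t))) t := by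
      have := h1.add (h2.const_mul (1 / (2 * c₂)))
      simp only [real_inner_self_eq_norm_sq] at this
      exact this
    convert key using 1
    have hcv : inner ℝ (v t) (cross (v t) (m t)) = (0 : ℝ) := inner_cross_self _ _
    have hcv2 : inner ℝ (cross (v t) (m t)) (v t) = (0 : ℝ) := by
      rw [real_inner_comm]; exact hcv
    rw [inner_sub_right, inner_sub_right, inner_sub_left, inner_sub_left,
      inner_smul_right, inner_smul_right, inner_smul_left, inner_smul_left,
      inner_smul_left, inner_smul_right, hcv, hcv2, real_inner_self_eq_norm_sq,
      real_inner_comm (β t) (v t)]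
    simp only [conj_trivial]
    field_simp
    ring
  refine ⟨hder, ?_, ?_⟩
  · have hdiff : Differentiable ℝ V := fun t => (hder t).differentiableAt
    apply antitone_of_deriv_nonpos hdiff
    intro t
    rw [(hder t).deriv]
    have : 0 ≤ ‖v t‖ ^ 2 := sq_nonneg _
    nlinarith
  · have hanti : Antitone V := by
      have hdiff : Differentiable ℝ V := fun t => (hder t).differentiableAt
      apply antitone_of_deriv_nonpos hdiff
      intro t
      rw [(hder t).deriv]
      nlinarith [sq_nonneg ‖v t‖]
    refine ⟨Real.sqrt (V 0) + Real.sqrt (2 * c₂ * V 0), fun t ht => ?_⟩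
    have hVt : V t ≤ V 0 := hanti ht
    have hβ2 : 0 ≤ (1 / (2 * c₂)) * ‖β t‖ ^ 2 := by positivity
    have hv2 : ‖v t‖ ^ 2 ≤ V 0 :=
      le_trans (le_add_of_nonneg_right hβ2 : ‖v t‖ ^ 2 ≤ V t) hVt
    have hb2 : ‖β t‖ ^ 2 ≤ 2 * c₂ * V 0 := by
      have h1 : (1 / (2 * c₂)) * ‖β t‖ ^ 2 ≤ V t :=
        le_add_of_nonneg_left (sq_nonneg _)
      have h2 : (1 / (2 * c₂)) * ‖β t‖ ^ 2 ≤ V 0 := le_trans h1 hVt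
      calc ‖β t‖ ^ 2 = 2 * c₂ * ((1 / (2 * c₂)) * ‖β t‖ ^ 2) := by field_simp
        _ ≤ 2 * c₂ * V 0 := by nlinarith
    have hvle : ‖v t‖ ≤ Real.sqrt (V 0) := by
      rw [← Real.sqrt_sq (norm_nonneg (v t))]
      exact Real.sqrt_le_sqrt hv2
    have hble : ‖β t‖ ≤ Real.sqrt (2 * c₂ * V 0) := by
      rw [← Real.sqrt_sq (norm_nonneg (β t))]
      exact Real.sqrt_le_sqrt hb2
    constructor
    · exact le_trans hvle (le_add_of_nonneg_right (Real.sqrt_nonneg _))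
    · exact le_trans hble (le_add_of_nonneg_left (Real.sqrt_nonneg _))
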